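/- Length converse for capacity achieving ULDCs: for all integers N ≥ 2 and K ≥ 1, every universal locally decodable code (ULDC) with locality N, K source symbols, M coded symbols, and symbol rate R_s = L_w/L_x = C*(N,K) must satisfy M ≥ N^K. -/

import Mathlib

open scoped BigOperators

noncomputable section

/-- A finite probability space: a finite type together with a probability mass function. -/
structure FinProbSpace where
  Ω : Type
  [fin : Fintype Ω]
  p : Ω → ℝ
  nonneg : ∀ ω, 0 ≤ p ω
  sum_one : ∑ ω, p ω = 1

attribute [instance] FinProbSpace.fin

namespace FinProbSpace

variable (P : FinProbSpace)

/-- Probability that the random variable `X` takes the value `a`. -/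
def prob {α : Type} [DecidableEq α] (X : P.Ω → α) (a : α) : ℝ :=
  ∑ ω, if X ω = a then P.p ω else 0

/-- Shannon entropy (in bits) of a finitely valued random variable. -/
def H {α : Type} [Fintype α] [DecidableEq α] (X : P.Ω → α) : ℝ :=
  ∑ a, -(P.prob X a * Real.logb 2 (P.prob X a))

/-- Conditional Shannon entropy `H(X | Y) = H(X, Y) - H(Y)` (in bits). -/
def condH {α β : Type} [Fintype α] [DecidableEq α] [Fintype β] [DecidableEq β]
    (X : P.Ω → α) (Y : P.Ω → β) : ℝ :=
  P.H (fun ω => (X ω, Y ω)) - P.H Y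

/-- The tuple random variable `(X_i)_{i ∈ ι}`. -/
def tuple {ι V : Type} (X : ι → P.Ω → V) : P.Ω → ι → V := fun ω i => X i ω

/-- Joint (mutual) independence of a finite family of random variables. -/
def iIndep {ι V : Type} [Fintype ι] [DecidableEq ι] [DecidableEq V] (X : ι → P.Ω → V) : Prop :=
  ∀ a : ι → V, P.prob (P.tuple X) a = ∏ i, P.prob (X i) (a i)

/-- `X` and `Y` contain the same information about everything beyond `Z`:
`H(X | Y, Z) = H(Y | X, Z) = 0`. -/
def sameInfo {α β γ : Type} [Fintype α] [DecidableEq α] [Fintype β] [DecidableEq β]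
    [Fintype γ] [DecidableEq γ] (X : P.Ω → α) (Y : P.Ω → β) (Z : P.Ω → γ) : Prop :=
  P.condH X (fun ω => (Y ω, Z ω)) = 0 ∧ P.condH Y (fun ω => (X ω, Z ω)) = 0

end FinProbSpace

/-- A locally decodable code with `K` source symbols of entropy `Lw`, `M` coded symbols of
entropy `Lx`, and locality `N`. -/
structure LDC (K N M : ℕ) (Lw Lx : ℝ) where
  P : FinProbSpace
  V : Type
  [fV : Fintype V]
  [dV : DecidableEq V]
  V' : Type
  [fV' : Fintype V']
  [dV' : DecidableEq V']
  /-- the source symbols -/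
  W : Fin K → P.Ω → V
  /-- the coded symbols -/
  X : Fin M → P.Ω → V'
  indep : P.iIndep W
  HW : ∀ k, P.H (W k) = Lw
  coded_fn : ∀ m, ∃ f : (Fin K → V) → V', ∀ ω, X m ω = f (fun k => W k ω)
  HX : ∀ m, P.H (X m) = Lx
  /-- the decoding supersets -/
  decSets : Fin K → Finset (Finset (Fin M))
  decSets_nonempty : ∀ k, (decSets k).Nonempty
  decSets_card : ∀ k, ∀ s ∈ decSets k, s.card = N
  decodes : ∀ k, ∀ s ∈ decSets k,
    P.condH (W k) (P.tuple fun i : {x // x ∈ s} => X i.1) = 0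

attribute [instance] LDC.fV LDC.dV LDC.fV' LDC.dV'

/-- A universal LDC: every coded symbol appears in some decoding set of every source symbol. -/
def LDC.IsUniversal {K N M : ℕ} {Lw Lx : ℝ} (C : LDC K N M Lw Lx) : Prop :=
  ∀ (m : Fin M) (k : Fin K), ∃ s ∈ C.decSets k, m ∈ s

/-- A perfectly smooth LDC: for each source symbol, every coded symbol lies in the same
number of decoding sets. -/
def LDC.IsSmooth {K N M : ℕ} {Lw Lx : ℝ} (C : LDC K N M Lw Lx) : Prop :=
  ∀ (k : Fin K) (m m' : Fin M),
    ((C.decSets k).filter (fun s => m ∈ s)).card =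
      ((C.decSets k).filter (fun s => m' ∈ s)).card

/-- `C*(N, K) = N (1 + 1/N + ⋯ + 1/N^{K-1})⁻¹`. -/
def Cstar (N K : ℕ) : ℝ := N / (∑ j ∈ Finset.range K, (1 / (N : ℝ)) ^ j)

/-- An `N`-query information retrieval scheme with `K` messages of entropy `Lw` and
answer sets of sizes `Mn n` with answers of entropy `Lx`. -/
structure IRScheme (K N : ℕ) (Mn : Fin N → ℕ) (Lw Lx : ℝ) where
  P : FinProbSpace
  V : Type
  [fV : Fintype V]
  [dV : DecidableEq V]
  V' : Type
  [fV' : Fintype V']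
  [dV' : DecidableEq V']
  /-- the messages -/
  W : Fin K → P.Ω → V
  /-- `A n m` is the `m`-th possible answer of database `n` -/
  A : (n : Fin N) → Fin (Mn n) → P.Ω → V'
  indep : P.iIndep W
  HW : ∀ k, P.H (W k) = Lw
  ans_fn : ∀ n m, ∃ f : (Fin K → V) → V', ∀ ω, A n m ω = f (fun k => W k ω)
  HA : ∀ n m, P.H (A n m) = Lx
  /-- the decoding supersets: each decoding set consists of one answer index per database -/
  Q : Fin K → Finset ((n : Fin N) → Fin (Mn n))
  Q_nonempty : ∀ k, (Q k).Nonempty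
  decodes : ∀ k, ∀ q ∈ Q k, P.condH (W k) (P.tuple fun n => A n (q n)) = 0

attribute [instance] IRScheme.fV IRScheme.dV IRScheme.fV' IRScheme.dV'

/-- A repudiative (RIR_max) scheme: every possible answer of every database appears in some
decoding set of every message. -/
def IRScheme.IsRIR {K N : ℕ} {Mn : Fin N → ℕ} {Lw Lx : ℝ} (C : IRScheme K N Mn Lw Lx) : Prop :=
  ∀ (n : Fin N) (m : Fin (Mn n)) (k : Fin K), ∃ q ∈ C.Q k, q n = m

/-- A perfectly private (PIR_max) scheme: for each message there is a distribution on its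
decoding sets such that the marginal distribution of the query to each database does not
depend on the message. -/
def IRScheme.IsPIR {K N : ℕ} {Mn : Fin N → ℕ} {Lw Lx : ℝ} (C : IRScheme K N Mn Lw Lx) : Prop :=
  ∃ μ : Fin K → ((n : Fin N) → Fin (Mn n)) → ℝ,
    (∀ k q, 0 ≤ μ k q) ∧ (∀ k, ∑ q ∈ C.Q k, μ k q = 1) ∧
    (∀ (k k' : Fin K) (n : Fin N) (m : Fin (Mn n)),
      ∑ q ∈ (C.Q k).filter (fun q => q n = m), μ k q =
        ∑ q ∈ (C.Q k').filter (fun q => q n = m), μ k' q)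

/-- `C_K(N) = (1 + 1/N + ⋯ + 1/N^{K-1})⁻¹`, the capacity of PIR. -/
def CK (N K : ℕ) : ℝ := (∑ j ∈ Finset.range K, (1 / (N : ℝ)) ^ j)⁻¹

/-! ### Auxiliary entropy lemmas -/

namespace FinProbSpace

variable (P : FinProbSpace)

lemma prob_nonneg {α : Type} [DecidableEq α] (X : P.Ω → α) (a : α) : 0 ≤ P.prob X a :=
  Finset.sum_nonneg fun ω _ => by by_cases h : X ω = a <;> simp [prob, h, P.nonneg ω]

lemma sum_prob {α : Type} [Fintype α] [DecidableEq α] (X : P.Ω → α) :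
    ∑ a, P.prob X a = 1 := by
  unfold prob
  rw [Finset.sum_comm]
  rw [← P.sum_one]
  refine Finset.sum_congr rfl fun ω _ => ?_
  rw [Finset.sum_ite_eq (Finset.univ) (X ω) (fun _ => P.p ω)]
  simp

lemma prob_le_one {α : Type} [Fintype α] [DecidableEq α] (X : P.Ω → α) (a : α) :
    P.prob X a ≤ 1 := by
  rw [← P.sum_prob X]
  exact Finset.single_le_sum (fun b _ => P.prob_nonneg X b) (Finset.mem_univ a)

lemma prob_comp {α β : Type} [Fintype α] [DecidableEq α] [DecidableEq β]
    (Z : P.Ω → α) (f : α → β) (b : β) :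
    P.prob (fun ω => f (Z ω)) b = ∑ c, if f c = b then P.prob Z c else 0 := by
  unfold prob
  have : ∀ c : α, (if f c = b then ∑ ω, if Z ω = c then P.p ω else 0 else 0)
      = ∑ ω, if f c = b then (if Z ω = c then P.p ω else 0) else 0 := by
    intro c; split <;> simp
  rw [Finset.sum_congr rfl fun c _ => this c, Finset.sum_comm]
  refine Finset.sum_congr rfl fun ω _ => ?_
  rw [Finset.sum_eq_single (Z ω)]
  · simp
  · intro c _ hc
    have : ¬ (Z ω = c) := fun h => hc h.symm
    simp [this]
  · simp

lemma exists_of_prob_ne_zero {α : Type} [DecidableEq α] (Z : P.Ω → α) (c : α)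
    (h : P.prob Z c ≠ 0) : ∃ ω, Z ω = c := by
  by_contra hc
  push_neg at hc
  exact h (Finset.sum_eq_zero fun ω _ => by simp [hc ω])

lemma H_congr_fun {α : Type} [Fintype α] [DecidableEq α] (X Y : P.Ω → α)
    (h : ∀ ω, X ω = Y ω) : P.H X = P.H Y := by
  have : X = Y := funext h
  rw [this]


lemma gibbs_point {p q : ℝ} (hp : 0 ≤ p) (hq : 0 ≤ q) (h : p ≠ 0 → q ≠ 0) :
    p * Real.logb 2 q - p * Real.logb 2 p ≤ (q - p) / Real.log 2 := by
  have h2 : (0:ℝ) < Real.log 2 := Real.log_pos one_lt_two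
  rcases eq_or_lt_of_le hp with hp0 | hp0
  · rw [← hp0]
    simp only [zero_mul, sub_zero, sub_self]
    positivity
  · have hq0 : 0 < q := lt_of_le_of_ne hq (fun hh => (h (ne_of_gt hp0)) hh.symm)
    have key : Real.log (q / p) ≤ q / p - 1 :=
      Real.log_le_sub_one_of_pos (div_pos hq0 hp0)
    rw [Real.log_div (ne_of_gt hq0) (ne_of_gt hp0)] at key
    have key2 : p * (Real.log q - Real.log p) ≤ q - p := by
      have := mul_le_mul_of_nonneg_left key (le_of_lt hp0)
      calc p * (Real.log q - Real.log p) ≤ p * (q / p - 1) := this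
        _ = q - p := by field_simp
    rw [Real.logb, Real.logb]
    have e : p * (Real.log q / Real.log 2) - p * (Real.log p / Real.log 2)
        = (p * (Real.log q - Real.log p)) / Real.log 2 := by ring
    rw [e]
    exact div_le_div_of_nonneg_right key2 h2.le

lemma H_nonneg {α : Type} [Fintype α] [DecidableEq α] (X : P.Ω → α) : 0 ≤ P.H X := by
  refine Finset.sum_nonneg fun a _ => ?_
  rcases eq_or_lt_of_le (P.prob_nonneg X a) with h0 | h0
  · rw [← h0]; simp
  · have h1 : P.prob X a ≤ 1 := P.prob_le_one X a
    have : Real.logb 2 (P.prob X a) ≤ 0 :=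
      Real.logb_nonpos one_lt_two (le_of_lt h0) h1
    have := mul_nonpos_of_nonneg_of_nonpos (le_of_lt h0) this
    linarith

lemma prob_le_prob_comp {α β : Type} [Fintype α] [DecidableEq α] [DecidableEq β]
    (Z : P.Ω → α) (f : α → β) (c : α) :
    P.prob Z c ≤ P.prob (fun ω => f (Z ω)) (f c) := by
  rw [P.prob_comp Z f (f c)]
  have : P.prob Z c = if f c = f c then P.prob Z c else 0 := by simp
  rw [this]
  refine Finset.single_le_sum (f := fun b => if f b = f c then P.prob Z b else 0)
    (fun b _ => ?_) (Finset.mem_univ c)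
  by_cases h : f b = f c <;> simp [h, P.prob_nonneg Z b]

lemma H_comp_repr {α β : Type} [Fintype α] [DecidableEq α] [Fintype β] [DecidableEq β]
    (Z : P.Ω → α) (f : α → β) :
    P.H (fun ω => f (Z ω)) =
      ∑ c, -(P.prob Z c * Real.logb 2 (P.prob (fun ω => f (Z ω)) (f c))) := by
  unfold H
  have step1 : ∀ b : β, -(P.prob (fun ω => f (Z ω)) b *
      Real.logb 2 (P.prob (fun ω => f (Z ω)) b)) =
      ∑ c, if f c = b then -(P.prob Z c *
        Real.logb 2 (P.prob (fun ω => f (Z ω)) b)) else 0 := by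
    intro b
    rw [P.prob_comp Z f b, Finset.sum_mul, neg_eq_iff_eq_neg, ← Finset.sum_neg_distrib]
    refine (Finset.sum_congr rfl fun c _ => ?_).symm
    split <;> simp
  rw [Finset.sum_congr rfl fun b _ => step1 b, Finset.sum_comm]
  refine Finset.sum_congr rfl fun c _ => ?_
  rw [Finset.sum_eq_single (f c)]
  · simp
  · intro b _ hb
    have : ¬ (f c = b) := fun h => hb h.symm
    simp [this]
  · intro h; exact absurd (Finset.mem_univ _) h

/-- Data processing: entropy of a function of `Z` is at most that of `Z`. -/
lemma H_comp_le {α β : Type} [Fintype α] [DecidableEq α] [Fintype β] [DecidableEq β]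
    (Z : P.Ω → α) (f : α → β) (Y : P.Ω → β) (hfY : ∀ ω, f (Z ω) = Y ω) :
    P.H Y ≤ P.H Z := by
  have hY : Y = fun ω => f (Z ω) := funext fun ω => (hfY ω).symm
  subst hY
  rw [P.H_comp_repr Z f]
  unfold H
  refine Finset.sum_le_sum fun c _ => ?_
  rcases eq_or_lt_of_le (P.prob_nonneg Z c) with h0 | h0
  · rw [← h0]; simp
  · have hle : P.prob Z c ≤ P.prob (fun ω => f (Z ω)) (f c) := P.prob_le_prob_comp Z f c
    have hlog : Real.logb 2 (P.prob Z c) ≤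
        Real.logb 2 (P.prob (fun ω => f (Z ω)) (f c)) :=
      Real.logb_le_logb_of_le one_lt_two h0 hle
    have := mul_le_mul_of_nonneg_left hlog (le_of_lt h0)
    linarith

/-- If `Y` and `Z` determine each other pointwise, then they have the same entropy. -/
lemma H_congr {α β : Type} [Fintype α] [DecidableEq α] [Fintype β] [DecidableEq β]
    (Z : P.Ω → α) (Y : P.Ω → β) (f : α → β) (g : β → α)
    (hf : ∀ ω, f (Z ω) = Y ω) (hg : ∀ ω, g (Y ω) = Z ω) : P.H Y = P.H Z := by
  have hprobY : ∀ b, P.prob Y b = ∑ c, if f c = b then P.prob Z c else 0 := by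
    intro b
    rw [← P.prob_comp Z f b]
    exact congrArg (fun X => P.prob X b) (funext fun ω => (hf ω).symm)
  have key : ∀ b : β, -(P.prob Y b * Real.logb 2 (P.prob Y b)) =
      ∑ c, if f c = b then -(P.prob Z c * Real.logb 2 (P.prob Z c)) else 0 := by
    intro b
    by_cases hex : ∃ c, f c = b ∧ P.prob Z c ≠ 0
    · obtain ⟨c₀, hfc₀, hpc₀⟩ := hex
      have hc₀ : c₀ = g b := by
        obtain ⟨ω, hω⟩ := P.exists_of_prob_ne_zero Z c₀ hpc₀
        have : Y ω = b := by rw [← hf ω, hω, hfc₀]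
        rw [← hω, ← hg ω, this]
      have huniq : ∀ c, f c = b → c ≠ g b → P.prob Z c = 0 := by
        intro c hc hne
        by_contra hp
        obtain ⟨ω, hω⟩ := P.exists_of_prob_ne_zero Z c hp
        have : Y ω = b := by rw [← hf ω, hω, hc]
        exact hne (by rw [← hω, ← hg ω, this])
      have hfgb : f (g b) = b := by rw [← hc₀]; exact hfc₀
      have hYb : P.prob Y b = P.prob Z (g b) := by
        rw [hprobY b, Finset.sum_eq_single (g b)]
        · simp [hfgb]
        · intro c _ hcne
          by_cases h : f c = b
          · simp [h, huniq c h hcne]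
          · simp [h]
        · simp
      rw [hYb, Finset.sum_eq_single (g b)]
      · simp [hfgb]
      · intro c _ hcne
        by_cases h : f c = b
        · simp [h, huniq c h hcne]
        · simp [h]
      · simp
    · push_neg at hex
      have hYb : P.prob Y b = 0 := by
        rw [hprobY b]
        refine Finset.sum_eq_zero fun c _ => ?_
        by_cases h : f c = b
        · simp [h, hex c h]
        · simp [h]
      rw [hYb]
      rw [Finset.sum_eq_zero fun c _ => ?_]
      · simp
      · by_cases h : f c = b
        · simp [h, hex c h]
        · simp [h]
  unfold H
  rw [Finset.sum_congr rfl fun b _ => key b, Finset.sum_comm]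
  refine Finset.sum_congr rfl fun c _ => ?_
  rw [Finset.sum_eq_single (f c)]
  · simp
  · intro b _ hb
    have : ¬ (f c = b) := fun h => hb h.symm
    simp [this]
  · intro h; exact absurd (Finset.mem_univ _) h

lemma H_const {α : Type} [Fintype α] [DecidableEq α] (c₀ : α) :
    P.H (fun _ => c₀) = 0 := by
  unfold H
  refine Finset.sum_eq_zero fun a _ => ?_
  have : P.prob (fun _ => c₀) a = if c₀ = a then 1 else 0 := by
    unfold prob
    split <;> simp [P.sum_one]
  rw [this]
  split <;> simp

lemma sum_prob_pair_fst {α γ : Type} [Fintype α] [DecidableEq α] [Fintype γ] [DecidableEq γ]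
    (X : P.Ω → α) (Y : P.Ω → γ) (c : γ) :
    ∑ a, P.prob (fun ω => (X ω, Y ω)) (a, c) = P.prob Y c := by
  unfold prob
  rw [Finset.sum_comm]
  refine Finset.sum_congr rfl fun ω _ => ?_
  rw [Finset.sum_eq_single (X ω)]
  · by_cases h : Y ω = c <;> simp [Prod.ext_iff, h]
  · intro a _ ha
    have : ¬ (X ω = a) := fun h => ha h.symm
    simp [Prod.ext_iff, this]
  · simp

/-- Submodularity of Shannon entropy. -/
lemma H_submod {α β γ : Type} [Fintype α] [DecidableEq α] [Fintype β] [DecidableEq β]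
    [Fintype γ] [DecidableEq γ] (A : P.Ω → α) (B : P.Ω → β) (Cv : P.Ω → γ) :
    P.H (fun ω => (A ω, B ω, Cv ω)) + P.H Cv ≤
      P.H (fun ω => (A ω, Cv ω)) + P.H (fun ω => (B ω, Cv ω)) := by
  classical
  have h2 : (0:ℝ) < Real.log 2 := Real.log_pos one_lt_two
  have hac : P.H (fun ω => (A ω, Cv ω)) =
      ∑ x : α × β × γ, -(P.prob (fun ω => (A ω, B ω, Cv ω)) x *
        Real.logb 2 (P.prob (fun ω => (A ω, Cv ω)) (x.1, x.2.2))) :=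
    P.H_comp_repr (fun ω => (A ω, B ω, Cv ω)) (fun x => (x.1, x.2.2))
  have hbc : P.H (fun ω => (B ω, Cv ω)) =
      ∑ x : α × β × γ, -(P.prob (fun ω => (A ω, B ω, Cv ω)) x *
        Real.logb 2 (P.prob (fun ω => (B ω, Cv ω)) (x.2.1, x.2.2))) :=
    P.H_comp_repr (fun ω => (A ω, B ω, Cv ω)) (fun x => (x.2.1, x.2.2))
  have hcc : P.H Cv =
      ∑ x : α × β × γ, -(P.prob (fun ω => (A ω, B ω, Cv ω)) x *
        Real.logb 2 (P.prob Cv x.2.2)) :=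
    P.H_comp_repr (fun ω => (A ω, B ω, Cv ω)) (fun x => x.2.2)
  have htt : P.H (fun ω => (A ω, B ω, Cv ω)) =
      ∑ x : α × β × γ, -(P.prob (fun ω => (A ω, B ω, Cv ω)) x *
        Real.logb 2 (P.prob (fun ω => (A ω, B ω, Cv ω)) x)) := rfl
  have hmargA : ∀ x : α × β × γ, P.prob (fun ω => (A ω, B ω, Cv ω)) x ≤
      P.prob (fun ω => (A ω, Cv ω)) (x.1, x.2.2) := fun x =>
    P.prob_le_prob_comp (fun ω => (A ω, B ω, Cv ω)) (fun y => (y.1, y.2.2)) x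
  have hmargB : ∀ x : α × β × γ, P.prob (fun ω => (A ω, B ω, Cv ω)) x ≤
      P.prob (fun ω => (B ω, Cv ω)) (x.2.1, x.2.2) := fun x =>
    P.prob_le_prob_comp (fun ω => (A ω, B ω, Cv ω)) (fun y => (y.2.1, y.2.2)) x
  have hmargC : ∀ x : α × β × γ, P.prob (fun ω => (A ω, B ω, Cv ω)) x ≤
      P.prob Cv x.2.2 := fun x =>
    P.prob_le_prob_comp (fun ω => (A ω, B ω, Cv ω)) (fun y => y.2.2) x
  set u : α × β × γ → ℝ := fun x =>
    if P.prob (fun ω => (A ω, B ω, Cv ω)) x = 0 then 0 else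
      P.prob (fun ω => (A ω, Cv ω)) (x.1, x.2.2) *
        P.prob (fun ω => (B ω, Cv ω)) (x.2.1, x.2.2) / P.prob Cv x.2.2 with hu
  have gibbs : ∀ x : α × β × γ,
      P.prob (fun ω => (A ω, B ω, Cv ω)) x *
          Real.logb 2 (P.prob (fun ω => (A ω, Cv ω)) (x.1, x.2.2))
        + P.prob (fun ω => (A ω, B ω, Cv ω)) x *
          Real.logb 2 (P.prob (fun ω => (B ω, Cv ω)) (x.2.1, x.2.2))
        - P.prob (fun ω => (A ω, B ω, Cv ω)) x * Real.logb 2 (P.prob Cv x.2.2)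
        - P.prob (fun ω => (A ω, B ω, Cv ω)) x *
          Real.logb 2 (P.prob (fun ω => (A ω, B ω, Cv ω)) x)
        ≤ (u x - P.prob (fun ω => (A ω, B ω, Cv ω)) x) / Real.log 2 := by
    intro x
    by_cases h0 : P.prob (fun ω => (A ω, B ω, Cv ω)) x = 0
    · simp [hu, h0]
    · have hpTpos : 0 < P.prob (fun ω => (A ω, B ω, Cv ω)) x :=
        lt_of_le_of_ne (P.prob_nonneg _ x) (Ne.symm h0)
      have hACpos : 0 < P.prob (fun ω => (A ω, Cv ω)) (x.1, x.2.2) :=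
        lt_of_lt_of_le hpTpos (hmargA x)
      have hBCpos : 0 < P.prob (fun ω => (B ω, Cv ω)) (x.2.1, x.2.2) :=
        lt_of_lt_of_le hpTpos (hmargB x)
      have hCpos : 0 < P.prob Cv x.2.2 := lt_of_lt_of_le hpTpos (hmargC x)
      have hux : u x = P.prob (fun ω => (A ω, Cv ω)) (x.1, x.2.2) *
          P.prob (fun ω => (B ω, Cv ω)) (x.2.1, x.2.2) / P.prob Cv x.2.2 := by
        simp [hu, h0]
      have hupos : 0 < u x := by
        rw [hux]
        exact div_pos (mul_pos hACpos hBCpos) hCpos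
      have hlogu : Real.logb 2 (u x) =
          Real.logb 2 (P.prob (fun ω => (A ω, Cv ω)) (x.1, x.2.2))
          + Real.logb 2 (P.prob (fun ω => (B ω, Cv ω)) (x.2.1, x.2.2))
          - Real.logb 2 (P.prob Cv x.2.2) := by
        rw [hux, Real.logb_div (ne_of_gt (mul_pos hACpos hBCpos)) (ne_of_gt hCpos),
          Real.logb_mul (ne_of_gt hACpos) (ne_of_gt hBCpos)]
      have hgibbs := gibbs_point (le_of_lt hpTpos) (le_of_lt hupos)
        (fun _ => ne_of_gt hupos)
      calc P.prob (fun ω => (A ω, B ω, Cv ω)) x *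
            Real.logb 2 (P.prob (fun ω => (A ω, Cv ω)) (x.1, x.2.2))
          + P.prob (fun ω => (A ω, B ω, Cv ω)) x *
            Real.logb 2 (P.prob (fun ω => (B ω, Cv ω)) (x.2.1, x.2.2))
          - P.prob (fun ω => (A ω, B ω, Cv ω)) x * Real.logb 2 (P.prob Cv x.2.2)
          - P.prob (fun ω => (A ω, B ω, Cv ω)) x *
            Real.logb 2 (P.prob (fun ω => (A ω, B ω, Cv ω)) x)
          = P.prob (fun ω => (A ω, B ω, Cv ω)) x * Real.logb 2 (u x)
            - P.prob (fun ω => (A ω, B ω, Cv ω)) x *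
              Real.logb 2 (P.prob (fun ω => (A ω, B ω, Cv ω)) x) := by
            rw [hlogu]; ring
        _ ≤ (u x - P.prob (fun ω => (A ω, B ω, Cv ω)) x) / Real.log 2 := hgibbs
  have husum : ∑ x : α × β × γ, u x ≤ 1 := by
    set v : α × β × γ → ℝ := fun x =>
      if P.prob Cv x.2.2 = 0 then 0 else
        P.prob (fun ω => (A ω, Cv ω)) (x.1, x.2.2) *
          P.prob (fun ω => (B ω, Cv ω)) (x.2.1, x.2.2) / P.prob Cv x.2.2 with hv
    have huv : ∀ x, u x ≤ v x := by
      intro x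
      by_cases h0 : P.prob (fun ω => (A ω, B ω, Cv ω)) x = 0
      · simp only [hu, hv, h0, if_true]
        split
        · exact le_refl 0
        · exact div_nonneg (mul_nonneg (P.prob_nonneg _ _) (P.prob_nonneg _ _))
            (P.prob_nonneg _ _)
      · have hpTpos : 0 < P.prob (fun ω => (A ω, B ω, Cv ω)) x :=
          lt_of_le_of_ne (P.prob_nonneg _ x) (Ne.symm h0)
        have hCne : ¬ (P.prob Cv x.2.2 = 0) :=
          ne_of_gt (lt_of_lt_of_le hpTpos (hmargC x))
        simp [hu, hv, h0, hCne]
    refine le_trans (Finset.sum_le_sum fun x _ => huv x) ?_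
    have hsplit : ∑ x : α × β × γ, v x = ∑ c : γ, ∑ a : α, ∑ b : β, v (a, b, c) := by
      rw [Fintype.sum_prod_type]
      have e1 : ∀ a : α, ∑ y : β × γ, v (a, y) = ∑ c : γ, ∑ b : β, v (a, b, c) := by
        intro a
        rw [Fintype.sum_prod_type]
        exact Finset.sum_comm
      rw [Finset.sum_congr rfl fun a _ => e1 a]
      exact Finset.sum_comm
    rw [hsplit]
    have hinner : ∀ c : γ, ∑ a : α, ∑ b : β, v (a, b, c) ≤ P.prob Cv c := by
      intro c
      by_cases hc : P.prob Cv c = 0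
      · have : ∀ a : α, ∀ b : β, v (a, b, c) = 0 := by
          intro a b; simp [hv, hc]
        rw [Finset.sum_congr rfl fun a _ => Finset.sum_congr rfl fun b _ => this a b]
        simp [hc]
      · have hval : ∀ a : α, ∀ b : β, v (a, b, c) =
            P.prob (fun ω => (A ω, Cv ω)) (a, c) *
              P.prob (fun ω => (B ω, Cv ω)) (b, c) / P.prob Cv c := by
          intro a b; simp [hv, hc]
        rw [Finset.sum_congr rfl fun a _ => Finset.sum_congr rfl fun b _ => hval a b]
        have : ∑ a : α, ∑ b : β, P.prob (fun ω => (A ω, Cv ω)) (a, c) *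
            P.prob (fun ω => (B ω, Cv ω)) (b, c) / P.prob Cv c
            = (∑ a : α, P.prob (fun ω => (A ω, Cv ω)) (a, c)) *
              (∑ b : β, P.prob (fun ω => (B ω, Cv ω)) (b, c)) / P.prob Cv c := by
          rw [Finset.sum_mul_sum, Finset.sum_div]
          refine Finset.sum_congr rfl fun a _ => ?_
          rw [Finset.sum_div]
        rw [this, P.sum_prob_pair_fst A Cv c, P.sum_prob_pair_fst B Cv c]
        rw [mul_div_assoc, div_self hc, mul_one]
    calc ∑ c : γ, ∑ a : α, ∑ b : β, v (a, b, c) ≤ ∑ c : γ, P.prob Cv c :=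
          Finset.sum_le_sum fun c _ => hinner c
      _ = 1 := P.sum_prob Cv
  have total : ∑ x : α × β × γ,
      (P.prob (fun ω => (A ω, B ω, Cv ω)) x *
          Real.logb 2 (P.prob (fun ω => (A ω, Cv ω)) (x.1, x.2.2))
        + P.prob (fun ω => (A ω, B ω, Cv ω)) x *
          Real.logb 2 (P.prob (fun ω => (B ω, Cv ω)) (x.2.1, x.2.2))
        - P.prob (fun ω => (A ω, B ω, Cv ω)) x * Real.logb 2 (P.prob Cv x.2.2)
        - P.prob (fun ω => (A ω, B ω, Cv ω)) x *
          Real.logb 2 (P.prob (fun ω => (A ω, B ω, Cv ω)) x)) ≤ 0 := by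
    refine le_trans (Finset.sum_le_sum fun x _ => gibbs x) ?_
    rw [← Finset.sum_div, Finset.sum_sub_distrib]
    rw [P.sum_prob (fun ω => (A ω, B ω, Cv ω))]
    apply div_nonpos_of_nonpos_of_nonneg
    · linarith
    · exact h2.le
  have expand : P.H (fun ω => (A ω, Cv ω)) + P.H (fun ω => (B ω, Cv ω))
      - (P.H (fun ω => (A ω, B ω, Cv ω)) + P.H Cv)
      = - ∑ x : α × β × γ,
      (P.prob (fun ω => (A ω, B ω, Cv ω)) x *
          Real.logb 2 (P.prob (fun ω => (A ω, Cv ω)) (x.1, x.2.2))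
        + P.prob (fun ω => (A ω, B ω, Cv ω)) x *
          Real.logb 2 (P.prob (fun ω => (B ω, Cv ω)) (x.2.1, x.2.2))
        - P.prob (fun ω => (A ω, B ω, Cv ω)) x * Real.logb 2 (P.prob Cv x.2.2)
        - P.prob (fun ω => (A ω, B ω, Cv ω)) x *
          Real.logb 2 (P.prob (fun ω => (A ω, B ω, Cv ω)) x)) := by
    rw [hac, hbc, hcc, htt, ← Finset.sum_add_distrib, ← Finset.sum_add_distrib,
      ← Finset.sum_sub_distrib, ← Finset.sum_neg_distrib]
    exact Finset.sum_congr rfl fun x _ => by ring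
  linarith

/-- Entropy of a tuple of jointly independent random variables is the sum of entropies. -/
lemma H_tuple_indep {ι V : Type} [Fintype ι] [DecidableEq ι] [Fintype V] [DecidableEq V]
    (W : ι → P.Ω → V) (hI : P.iIndep W) :
    P.H (P.tuple W) = ∑ i, P.H (W i) := by
  classical
  have claim : ∀ a : ι → V,
      -(P.prob (P.tuple W) a * Real.logb 2 (P.prob (P.tuple W) a)) =
      ∑ j, ∏ i, (Function.update (fun i v => P.prob (W i) v) j
          (fun v => -(P.prob (W j) v * Real.logb 2 (P.prob (W j) v)))) i (a i) := by
    intro a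
    rw [hI a]
    by_cases hz : ∃ i, P.prob (W i) (a i) = 0
    · obtain ⟨i₀, hi₀⟩ := hz
      have hP : ∏ i, P.prob (W i) (a i) = 0 :=
        Finset.prod_eq_zero (Finset.mem_univ i₀) hi₀
      rw [hP]
      rw [Finset.sum_eq_zero fun j _ => ?_]
      · simp
      · by_cases hij : i₀ = j
        · subst hij
          refine Finset.prod_eq_zero (Finset.mem_univ i₀) ?_
          rw [Function.update_self, hi₀]
          simp
        · refine Finset.prod_eq_zero (Finset.mem_univ i₀) ?_
          rw [Function.update_of_ne hij, hi₀]
    · push_neg at hz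
      have hlog : Real.logb 2 (∏ i, P.prob (W i) (a i)) =
          ∑ i, Real.logb 2 (P.prob (W i) (a i)) := by
        unfold Real.logb
        rw [Real.log_prod (fun i _ => hz i), Finset.sum_div]
      rw [hlog, Finset.mul_sum, ← Finset.sum_neg_distrib]
      refine Finset.sum_congr rfl fun j _ => ?_
      have hprod : ∏ i, P.prob (W i) (a i) =
          P.prob (W j) (a j) * ∏ i ∈ Finset.univ.erase j, P.prob (W i) (a i) :=
        (Finset.mul_prod_erase Finset.univ _ (Finset.mem_univ j)).symm
      have hupd : ∏ i, (Function.update (fun i v => P.prob (W i) v) j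
          (fun v => -(P.prob (W j) v * Real.logb 2 (P.prob (W j) v)))) i (a i) =
          (-(P.prob (W j) (a j) * Real.logb 2 (P.prob (W j) (a j)))) *
            ∏ i ∈ Finset.univ.erase j, P.prob (W i) (a i) := by
        rw [← Finset.mul_prod_erase Finset.univ _ (Finset.mem_univ j)]
        rw [Function.update_self]
        congr 1
        refine Finset.prod_congr rfl fun i hi => ?_
        rw [Function.update_of_ne (Finset.ne_of_mem_erase hi)]
      rw [hupd, hprod]
      ring
  have hH : P.H (P.tuple W) =
      ∑ j, ∑ a : ι → V, ∏ i, (Function.update (fun i v => P.prob (W i) v) j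
          (fun v => -(P.prob (W j) v * Real.logb 2 (P.prob (W j) v)))) i (a i) := by
    unfold H
    rw [Finset.sum_congr rfl fun a _ => claim a]
    exact Finset.sum_comm
  rw [hH]
  refine Finset.sum_congr rfl fun j _ => ?_
  rw [← Fintype.prod_sum]
  rw [← Finset.mul_prod_erase Finset.univ _ (Finset.mem_univ j)]
  have h1 : ∑ v, (Function.update (fun i v => P.prob (W i) v) j
      (fun v => -(P.prob (W j) v * Real.logb 2 (P.prob (W j) v)))) j v = P.H (W j) := by
    rw [Function.update_self]
    rfl
  have h2 : ∏ i ∈ Finset.univ.erase j, ∑ v, (Function.update (fun i v => P.prob (W i) v) j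
      (fun v => -(P.prob (W j) v * Real.logb 2 (P.prob (W j) v)))) i v = 1 := by
    refine Finset.prod_eq_one fun i hi => ?_
    rw [Function.update_of_ne (Finset.ne_of_mem_erase hi)]
    exact P.sum_prob (W i)
  rw [h1, h2, mul_one]

/-! ### Conditional entropy toolkit -/

lemma condH_nonneg {α β : Type} [Fintype α] [DecidableEq α] [Fintype β] [DecidableEq β]
    (X : P.Ω → α) (Y : P.Ω → β) : 0 ≤ P.condH X Y := by
  have := P.H_comp_le (fun ω => (X ω, Y ω)) Prod.snd Y (fun ω => rfl)
  unfold condH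
  linarith

lemma condH_congr {α α' β β' : Type} [Fintype α] [DecidableEq α] [Fintype α'] [DecidableEq α']
    [Fintype β] [DecidableEq β] [Fintype β'] [DecidableEq β']
    (X : P.Ω → α) (X' : P.Ω → α') (Y : P.Ω → β) (Y' : P.Ω → β')
    (f : α × β → α') (g : α' × β' → α) (fc : β → β') (gc : β' → β)
    (hf : ∀ ω, f (X ω, Y ω) = X' ω) (hg : ∀ ω, g (X' ω, Y' ω) = X ω)
    (hfc : ∀ ω, fc (Y ω) = Y' ω) (hgc : ∀ ω, gc (Y' ω) = Y ω) :
    P.condH X Y = P.condH X' Y' := by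
  have h1 : P.H (fun ω => (X' ω, Y' ω)) = P.H (fun ω => (X ω, Y ω)) := by
    refine P.H_congr (fun ω => (X ω, Y ω)) (fun ω => (X' ω, Y' ω))
      (fun p => (f p, fc p.2)) (fun p => (g p, gc p.2)) (fun ω => ?_) (fun ω => ?_)
    · show (f (X ω, Y ω), fc (Y ω)) = (X' ω, Y' ω)
      rw [hf ω, hfc ω]
    · show (g (X' ω, Y' ω), gc (Y' ω)) = (X ω, Y ω)
      rw [hg ω, hgc ω]
  have h2 : P.H Y' = P.H Y :=
    P.H_congr Y Y' fc gc hfc hgc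
  unfold condH
  rw [h1, h2]

lemma condH_fn_zero {α β : Type} [Fintype α] [DecidableEq α] [Fintype β] [DecidableEq β]
    (X : P.Ω → α) (Y : P.Ω → β) (F : β → α) (h : ∀ ω, X ω = F (Y ω)) :
    P.condH X Y = 0 := by
  have h1 : P.H (fun ω => (X ω, Y ω)) = P.H Y := by
    refine P.H_congr Y (fun ω => (X ω, Y ω)) (fun b => (F b, b)) Prod.snd
      (fun ω => ?_) (fun ω => rfl)
    show (F (Y ω), Y ω) = (X ω, Y ω)
    rw [← h ω]
  unfold condH
  rw [h1, sub_self]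

lemma condH_comp_le {α α' β : Type} [Fintype α] [DecidableEq α] [Fintype α'] [DecidableEq α']
    [Fintype β] [DecidableEq β] (X : P.Ω → α) (X' : P.Ω → α') (Y : P.Ω → β)
    (f : α → α') (h : ∀ ω, f (X ω) = X' ω) : P.condH X' Y ≤ P.condH X Y := by
  have := P.H_comp_le (fun ω => (X ω, Y ω)) (fun p => (f p.1, p.2))
    (fun ω => (X' ω, Y ω)) (fun ω => by show (f (X ω), Y ω) = (X' ω, Y ω); rw [h ω])
  unfold condH
  linarith

lemma condH_mono_left {α β γ : Type} [Fintype α] [DecidableEq α] [Fintype β] [DecidableEq β]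
    [Fintype γ] [DecidableEq γ] (X : P.Ω → α) (B : P.Ω → β) (Y : P.Ω → γ) :
    P.condH X Y ≤ P.condH (fun ω => (X ω, B ω)) Y :=
  P.condH_comp_le (fun ω => (X ω, B ω)) X Y Prod.fst (fun ω => rfl)

lemma condH_chain {α β γ : Type} [Fintype α] [DecidableEq α] [Fintype β] [DecidableEq β]
    [Fintype γ] [DecidableEq γ] (X : P.Ω → α) (B : P.Ω → β) (Y : P.Ω → γ) :
    P.condH (fun ω => (X ω, B ω)) Y
      = P.condH X (fun ω => (B ω, Y ω)) + P.condH B Y := by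
  have e1 : P.condH (fun ω => (X ω, B ω)) Y
      = P.H (fun ω => ((X ω, B ω), Y ω)) - P.H Y := rfl
  have e2 : P.condH X (fun ω => (B ω, Y ω))
      = P.H (fun ω => (X ω, B ω, Y ω)) - P.H (fun ω => (B ω, Y ω)) := rfl
  have e3 : P.condH B Y = P.H (fun ω => (B ω, Y ω)) - P.H Y := rfl
  have h1 : P.H (fun ω => ((X ω, B ω), Y ω)) = P.H (fun ω => (X ω, B ω, Y ω)) := by
    refine P.H_congr (fun ω => (X ω, B ω, Y ω)) (fun ω => ((X ω, B ω), Y ω))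
      (fun p => ((p.1, p.2.1), p.2.2)) (fun p => (p.1.1, (p.1.2, p.2)))
      (fun ω => rfl) (fun ω => rfl)
  rw [e1, e2, e3, h1]
  ring

/-- Conditioning on a finer random variable gives smaller conditional entropy. -/
lemma condH_cond_det_le {α β β' : Type} [Fintype α] [DecidableEq α] [Fintype β] [DecidableEq β]
    [Fintype β'] [DecidableEq β'] (X : P.Ω → α) (Y : P.Ω → β) (Y' : P.Ω → β')
    (g : β → β') (hg : ∀ ω, g (Y ω) = Y' ω) : P.condH X Y ≤ P.condH X Y' := by
  have h1 : P.condH X Y = P.condH X (fun ω => (Y ω, Y' ω)) := by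
    refine P.condH_congr X X Y (fun ω => (Y ω, Y' ω)) Prod.fst Prod.fst
      (fun b => (b, g b)) Prod.fst (fun ω => rfl) (fun ω => rfl) (fun ω => ?_) (fun ω => rfl)
    show (Y ω, g (Y ω)) = (Y ω, Y' ω)
    rw [hg ω]
  have h2 := P.H_submod X Y Y'
  have e1 : P.condH X (fun ω => (Y ω, Y' ω))
      = P.H (fun ω => (X ω, Y ω, Y' ω)) - P.H (fun ω => (Y ω, Y' ω)) := rfl
  have e2 : P.condH X Y' = P.H (fun ω => (X ω, Y' ω)) - P.H Y' := rfl
  rw [h1, e1, e2]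
  linarith

lemma condH_pair_le {α β γ : Type} [Fintype α] [DecidableEq α] [Fintype β] [DecidableEq β]
    [Fintype γ] [DecidableEq γ] (X : P.Ω → α) (B : P.Ω → β) (Y : P.Ω → γ) :
    P.condH (fun ω => (X ω, B ω)) Y ≤ P.condH X Y + P.condH B Y := by
  rw [P.condH_chain X B Y]
  have := P.condH_cond_det_le X (fun ω => (B ω, Y ω)) Y Prod.snd (fun ω => rfl)
  linarith

lemma H_pair_le {α β : Type} [Fintype α] [DecidableEq α] [Fintype β] [DecidableEq β]
    (X : P.Ω → α) (B : P.Ω → β) :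
    P.H (fun ω => (X ω, B ω)) ≤ P.H X + P.H B := by
  have h := P.condH_pair_le X B (fun _ => (0 : Fin 1))
  have e0 : P.H (fun _ => (0 : Fin 1)) = 0 := P.H_const 0
  have e1 : P.condH (fun ω => (X ω, B ω)) (fun _ => (0 : Fin 1))
      = P.H (fun ω => ((X ω, B ω), (0 : Fin 1))) - P.H (fun _ => (0 : Fin 1)) := rfl
  have e2 : P.condH X (fun _ => (0 : Fin 1))
      = P.H (fun ω => (X ω, (0 : Fin 1))) - P.H (fun _ => (0 : Fin 1)) := rfl
  have e3 : P.condH B (fun _ => (0 : Fin 1))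
      = P.H (fun ω => (B ω, (0 : Fin 1))) - P.H (fun _ => (0 : Fin 1)) := rfl
  have g1 : P.H (fun ω => ((X ω, B ω), (0 : Fin 1))) = P.H (fun ω => (X ω, B ω)) :=
    P.H_congr (fun ω => (X ω, B ω)) (fun ω => ((X ω, B ω), (0 : Fin 1)))
      (fun p => (p, 0)) Prod.fst (fun ω => rfl) (fun ω => rfl)
  have g2 : P.H (fun ω => (X ω, (0 : Fin 1))) = P.H X :=
    P.H_congr X (fun ω => (X ω, (0 : Fin 1)))
      (fun p => (p, 0)) Prod.fst (fun ω => rfl) (fun ω => rfl)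
  have g3 : P.H (fun ω => (B ω, (0 : Fin 1))) = P.H B :=
    P.H_congr B (fun ω => (B ω, (0 : Fin 1)))
      (fun p => (p, 0)) Prod.fst (fun ω => rfl) (fun ω => rfl)
  rw [e1, e2, e3, e0, g1, g2, g3] at h
  linarith

end FinProbSpace

/-! ### ULDC-specific development -/

section ULDCProof

open FinProbSpace

variable {K N M : ℕ} {Lw Lx : ℝ}

/-- The prefix `(W_0, …, W_{k-1})` of the source symbols, masked into `Option`. -/
def LDC.preW (C : LDC K N M Lw Lx) (k : ℕ) : C.P.Ω → (Fin K → Option C.V) :=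
  fun ω i => if (i : ℕ) < k then some (C.W i ω) else none

/-- The suffix `(W_k, …, W_{K-1})` of the source symbols, masked into `Option`. -/
def LDC.sufW (C : LDC K N M Lw Lx) (k : ℕ) : C.P.Ω → (Fin K → Option C.V) :=
  fun ω i => if k ≤ (i : ℕ) then some (C.W i ω) else none

/-- The tuple of coded symbols indexed by `S`. -/
def LDC.XS (C : LDC K N M Lw Lx) (S : Finset (Fin M)) : C.P.Ω → ({x // x ∈ S} → C.V') :=
  C.P.tuple fun i : {x // x ∈ S} => C.X i.1

/-- `H(X_m | W_{<k})`. -/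
def LDC.hk (C : LDC K N M Lw Lx) (k : ℕ) (m : Fin M) : ℝ :=
  C.P.condH (C.X m) (C.preW k)

/-- `H(X_S | W_{<k})`. -/
def LDC.hkS (C : LDC K N M Lw Lx) (k : ℕ) (S : Finset (Fin M)) : ℝ :=
  C.P.condH (C.XS S) (C.preW k)

lemma LDC.omega_nonempty (C : LDC K N M Lw Lx) : Nonempty C.P.Ω := by
  by_contra h
  have h1 := C.P.sum_one
  haveI := not_nonempty_iff.mp h
  rw [Finset.univ_eq_empty, Finset.sum_empty] at h1
  norm_num at h1

lemma LDC.H_preW_zero (C : LDC K N M Lw Lx) : C.P.H (C.preW 0) = 0 := by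
  have e : C.P.H (C.preW 0) = C.P.H (fun _ => (fun _ : Fin K => (none : Option C.V))) := by
    apply C.P.H_congr_fun
    intro ω; funext i; simp [LDC.preW]
  rw [e, C.P.H_const]

lemma LDC.hk_zero (C : LDC K N M Lw Lx) (m : Fin M) : C.hk 0 m = Lx := by
  have e1 : C.hk 0 m = C.P.H (fun ω => (C.X m ω, C.preW 0 ω)) - C.P.H (C.preW 0) := rfl
  have e2 : C.P.H (fun ω => (C.X m ω, C.preW 0 ω)) = C.P.H (C.X m) := by
    refine C.P.H_congr (C.X m) (fun ω => (C.X m ω, C.preW 0 ω))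
      (fun v => (v, fun _ : Fin K => none)) Prod.fst (fun ω => ?_) (fun ω => rfl)
    show (C.X m ω, (fun _ : Fin K => (none : Option C.V))) = (C.X m ω, C.preW 0 ω)
    have hp : C.preW 0 ω = (fun _ : Fin K => (none : Option C.V)) := by
      funext i; simp [LDC.preW]
    rw [hp]
  rw [e1, e2, C.H_preW_zero, C.HX m, sub_zero]

lemma LDC.hk_K (C : LDC K N M Lw Lx) (hK : 1 ≤ K) (m : Fin M) : C.hk K m = 0 := by
  obtain ⟨f₀, hf₀⟩ := C.coded_fn m
  obtain ⟨ω₀⟩ := C.omega_nonempty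
  refine C.P.condH_fn_zero _ _
    (fun t => f₀ (fun i => (t i).getD (C.W ⟨0, hK⟩ ω₀))) (fun ω => ?_)
  rw [hf₀ ω]
  congr 1
  funext i
  simp [LDC.preW, i.isLt]

lemma LDC.H_preW_le (C : LDC K N M Lw Lx) : ∀ k, k ≤ K → C.P.H (C.preW k) ≤ k * Lw := by
  intro k
  induction k with
  | zero => intro _; rw [C.H_preW_zero]; simp
  | succ k ih =>
    intro hk1
    have hkK : k < K := hk1
    have step : C.P.H (C.preW (k+1)) ≤
        C.P.H (fun ω => (C.W ⟨k, hkK⟩ ω, C.preW k ω)) := by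
      refine C.P.H_comp_le (fun ω => (C.W ⟨k, hkK⟩ ω, C.preW k ω))
        (fun p => fun i : Fin K => if (i : ℕ) < k then p.2 i
          else if (i : ℕ) = k then some p.1 else none) (C.preW (k+1)) (fun ω => ?_)
      funext i
      by_cases h1 : (i : ℕ) < k
      · simp [LDC.preW, h1, Nat.lt_succ_of_lt h1]
      · by_cases h2 : (i : ℕ) = k
        · have hik : i = ⟨k, hkK⟩ := Fin.ext h2
          rw [hik]
          simp [LDC.preW]
        · have h3 : ¬ (i : ℕ) < k + 1 := by omega
          simp [LDC.preW, h1, h2, h3]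
    have pair_le := C.P.H_pair_le (C.W ⟨k, hkK⟩) (C.preW k)
    have ihk := ih (le_of_lt hkK)
    have hW := C.HW ⟨k, hkK⟩
    push_cast
    push_cast at ihk
    linarith
  
lemma LDC.H_sufW_le (C : LDC K N M Lw Lx) : ∀ j, j ≤ K →
    C.P.H (C.sufW (K - j)) ≤ j * Lw := by
  intro j
  induction j with
  | zero =>
    intro _
    have e : C.P.H (C.sufW (K - 0)) = C.P.H (fun _ => (fun _ : Fin K => (none : Option C.V))) := by
      apply C.P.H_congr_fun
      intro ω; funext i
      have : ¬ (K - 0 ≤ (i : ℕ)) := by have := i.isLt; omega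
      simp [LDC.sufW, this]
    rw [e, C.P.H_const]; simp
  | succ j ih =>
    intro hj1
    have hkK : K - (j+1) < K := by omega
    set k := K - (j+1) with hkdef
    have hsk : K - j = k + 1 := by omega
    have step : C.P.H (C.sufW k) ≤
        C.P.H (fun ω => (C.W ⟨k, hkK⟩ ω, C.sufW (k+1) ω)) := by
      refine C.P.H_comp_le (fun ω => (C.W ⟨k, hkK⟩ ω, C.sufW (k+1) ω))
        (fun p => fun i : Fin K => if (i : ℕ) = k then some p.1 else p.2 i)
        (C.sufW k) (fun ω => ?_)
      funext i
      by_cases h1 : (i : ℕ) = k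
      · have hik : i = ⟨k, hkK⟩ := Fin.ext h1
        rw [hik]
        simp [LDC.sufW]
      · by_cases h2 : k ≤ (i : ℕ)
        · have h3 : k + 1 ≤ (i : ℕ) := by omega
          simp [LDC.sufW, h1, h2, h3]
        · have h3 : ¬ (k + 1 ≤ (i : ℕ)) := by omega
          simp [LDC.sufW, h1, h2, h3]
    have pair_le := C.P.H_pair_le (C.W ⟨k, hkK⟩) (C.sufW (k+1))
    have ihk : C.P.H (C.sufW (k+1)) ≤ j * Lw := by
      rw [← hsk]
      exact ih (by omega)
    have hW := C.HW ⟨k, hkK⟩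
    push_cast
    linarith

lemma LDC.H_tupleW (C : LDC K N M Lw Lx) : C.P.H (C.P.tuple C.W) = K * Lw := by
  rw [C.P.H_tuple_indep C.W C.indep]
  rw [Finset.sum_congr rfl fun i _ => C.HW i]
  simp [mul_comm]

lemma LDC.H_preW_eq (C : LDC K N M Lw Lx) (hK : 1 ≤ K) :
    ∀ k, k ≤ K → C.P.H (C.preW k) = k * Lw := by
  obtain ⟨ω₀⟩ := C.omega_nonempty
  have hd : C.V := C.W ⟨0, hK⟩ ω₀
  intro k hkK
  refine le_antisymm (C.H_preW_le k hkK) ?_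
  -- the full tuple is determined by the pair (preW k, sufW k)
  have hfull : C.P.H (C.P.tuple C.W) ≤
      C.P.H (fun ω => (C.preW k ω, C.sufW k ω)) := by
    refine C.P.H_comp_le (fun ω => (C.preW k ω, C.sufW k ω))
      (fun p => fun i : Fin K => if (i : ℕ) < k then (p.1 i).getD hd else (p.2 i).getD hd)
      (C.P.tuple C.W) (fun ω => ?_)
    funext i
    by_cases h1 : (i : ℕ) < k
    · simp [LDC.preW, h1, FinProbSpace.tuple]
    · have h2 : k ≤ (i : ℕ) := by omega
      simp [LDC.sufW, h1, h2, FinProbSpace.tuple]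
  have hpair := C.P.H_pair_le (C.preW k) (C.sufW k)
  have hsuf : C.P.H (C.sufW k) ≤ (K - k : ℕ) * Lw := by
    have := C.H_sufW_le (K - k) (by omega)
    have e : K - (K - k) = k := by omega
    rw [e] at this
    exact this
  have htup := C.H_tupleW
  have hcast : ((K - k : ℕ) : ℝ) = (K : ℝ) - (k : ℝ) := by
    push_cast [Nat.cast_sub hkK]
    ring
  rw [hcast] at hsuf
  linarith

lemma LDC.decode_zero (C : LDC K N M Lw Lx) (k : ℕ) (hkK : k < K)
    (S : Finset (Fin M)) (hS : S ∈ C.decSets ⟨k, hkK⟩) :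
    C.P.condH (C.W ⟨k, hkK⟩) (fun ω => (C.XS S ω, C.preW k ω)) = 0 := by
  refine le_antisymm ?_ (C.P.condH_nonneg _ _)
  have hle := C.P.condH_cond_det_le (C.W ⟨k, hkK⟩)
    (fun ω => (C.XS S ω, C.preW k ω)) (C.XS S) Prod.fst (fun ω => rfl)
  have hdec : C.P.condH (C.W ⟨k, hkK⟩) (C.XS S) = 0 := C.decodes ⟨k, hkK⟩ S hS
  linarith

lemma LDC.hkS_step (C : LDC K N M Lw Lx) (hK : 1 ≤ K) (k : ℕ) (hkK : k < K)
    (S : Finset (Fin M)) (hS : S ∈ C.decSets ⟨k, hkK⟩) :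
    C.hkS (k+1) S = C.hkS k S - Lw := by
  have e_down : C.P.H (fun ω => (C.XS S ω, C.preW k ω)) ≤
      C.P.H (fun ω => (C.XS S ω, C.preW (k+1) ω)) := by
    refine C.P.H_comp_le (fun ω => (C.XS S ω, C.preW (k+1) ω))
      (fun p => (p.1, fun i : Fin K => if (i : ℕ) < k then p.2 i else none))
      (fun ω => (C.XS S ω, C.preW k ω)) (fun ω => ?_)
    show (C.XS S ω, fun i : Fin K => if (i : ℕ) < k then C.preW (k+1) ω i else none)
        = (C.XS S ω, C.preW k ω)
    congr 1
    funext i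
    by_cases h1 : (i : ℕ) < k
    · simp [LDC.preW, h1, Nat.lt_succ_of_lt h1]
    · simp [LDC.preW, h1]
  have e_up : C.P.H (fun ω => (C.XS S ω, C.preW (k+1) ω)) ≤
      C.P.H (fun ω => (C.W ⟨k, hkK⟩ ω, (C.XS S ω, C.preW k ω))) := by
    refine C.P.H_comp_le (fun ω => (C.W ⟨k, hkK⟩ ω, (C.XS S ω, C.preW k ω)))
      (fun p => (p.2.1, fun i : Fin K => if (i : ℕ) < k then p.2.2 i
        else if (i : ℕ) = k then some p.1 else none))
      (fun ω => (C.XS S ω, C.preW (k+1) ω)) (fun ω => ?_)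
    show (C.XS S ω, (fun i : Fin K => if (i : ℕ) < k then C.preW k ω i
        else if (i : ℕ) = k then some (C.W ⟨k, hkK⟩ ω) else none))
        = (C.XS S ω, C.preW (k+1) ω)
    congr 1
    funext i
    by_cases h1 : (i : ℕ) < k
    · simp [LDC.preW, h1, Nat.lt_succ_of_lt h1]
    · by_cases h2 : (i : ℕ) = k
      · have hik : i = ⟨k, hkK⟩ := Fin.ext h2
        rw [hik]
        simp [LDC.preW]
      · have h3 : ¬ (i : ℕ) < k + 1 := by omega
        simp [LDC.preW, h1, h2, h3]
  have e_eq : C.P.condH (C.W ⟨k, hkK⟩) (fun ω => (C.XS S ω, C.preW k ω))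
      = C.P.H (fun ω => (C.W ⟨k, hkK⟩ ω, (C.XS S ω, C.preW k ω)))
        - C.P.H (fun ω => (C.XS S ω, C.preW k ω)) := rfl
  have hzero := C.decode_zero k hkK S hS
  have key : C.P.H (fun ω => (C.XS S ω, C.preW (k+1) ω))
      = C.P.H (fun ω => (C.XS S ω, C.preW k ω)) := by
    rw [e_eq] at hzero
    linarith
  have f1 : C.hkS (k+1) S = C.P.H (fun ω => (C.XS S ω, C.preW (k+1) ω))
      - C.P.H (C.preW (k+1)) := rfl
  have f2 : C.hkS k S = C.P.H (fun ω => (C.XS S ω, C.preW k ω))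
      - C.P.H (C.preW k) := rfl
  have p1 := C.H_preW_eq hK (k+1) hkK
  have p2 := C.H_preW_eq hK k (le_of_lt hkK)
  rw [f1, f2, key, p1, p2]
  push_cast
  ring

lemma LDC.hkS_le_sum (C : LDC K N M Lw Lx) (k : ℕ) :
    ∀ S : Finset (Fin M), C.hkS k S ≤ ∑ m ∈ S, C.hk k m := by
  classical
  intro S
  induction S using Finset.induction_on with
  | empty =>
    have : C.hkS k ∅ = 0 := by
      refine C.P.condH_fn_zero _ _
        (fun _ => (fun x => absurd x.2 (Finset.notMem_empty x.1))) (fun ω => ?_)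
      funext x
      exact absurd x.2 (Finset.notMem_empty x.1)
    rw [this]
    simp
  | @insert a s ha ih =>
    have hcongr : C.hkS k (insert a s)
        = C.P.condH (fun ω => (C.X a ω, C.XS s ω)) (C.preW k) := by
      refine C.P.condH_congr (C.XS (insert a s)) (fun ω => (C.X a ω, C.XS s ω))
        (C.preW k) (C.preW k)
        (fun p => (p.1 ⟨a, Finset.mem_insert_self a s⟩,
          fun x => p.1 ⟨x.1, Finset.mem_insert_of_mem x.2⟩))
        (fun p => fun x => if hx : x.1 ∈ s then p.1.2 ⟨x.1, hx⟩ else p.1.1)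
        id id (fun ω => rfl) (fun ω => ?_) (fun ω => rfl) (fun ω => rfl)
      show (fun x : {x // x ∈ insert a s} =>
          if hx : x.1 ∈ s then C.XS s ω ⟨x.1, hx⟩ else C.X a ω) = C.XS (insert a s) ω
      funext x
      by_cases hx : x.1 ∈ s
      · simp only [hx, dif_pos]
        rfl
      · simp only [hx, dif_neg, not_false_iff]
        have : x.1 = a := by
          rcases Finset.mem_insert.mp x.2 with h | h
          · exact h
          · exact absurd h hx
        show C.X a ω = C.XS (insert a s) ω x
        have e : C.XS (insert a s) ω x = C.X x.1 ω := rfl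
        rw [e, this]
    rw [hcongr, Finset.sum_insert ha]
    have hp := C.P.condH_pair_le (C.X a) (C.XS s) (C.preW k)
    have : C.P.condH (C.XS s) (C.preW k) ≤ ∑ m ∈ s, C.hk k m := ih
    have ea : C.P.condH (C.X a) (C.preW k) = C.hk k a := rfl
    linarith

lemma LDC.hk_le_hkS (C : LDC K N M Lw Lx) (k : ℕ) {S : Finset (Fin M)} {m : Fin M}
    (hm : m ∈ S) : C.hk k m ≤ C.hkS k S :=
  C.P.condH_comp_le (C.XS S) (C.X m) (C.preW k) (fun h => h ⟨m, hm⟩) (fun ω => rfl)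

end ULDCProof

namespace FinProbSpace

/-- Transitivity of "determined given side information". -/
lemma condH_det_trans (P : FinProbSpace) {α β γ δ : Type}
    [Fintype α] [DecidableEq α] [Fintype β] [DecidableEq β]
    [Fintype γ] [DecidableEq γ] [Fintype δ] [DecidableEq δ]
    (Xv : P.Ω → α) (Yv : P.Ω → β) (Zv : P.Ω → γ) (Pv : P.Ω → δ)
    (h1 : P.condH Yv (fun ω => (Xv ω, Pv ω)) = 0)
    (h2 : P.condH Zv (fun ω => (Yv ω, Pv ω)) = 0) :
    P.condH Zv (fun ω => (Xv ω, Pv ω)) = 0 := by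
  refine le_antisymm ?_ (P.condH_nonneg _ _)
  have h3 : P.condH Zv (fun ω => (Xv ω, Pv ω)) ≤
      P.condH (fun ω => (Zv ω, Yv ω)) (fun ω => (Xv ω, Pv ω)) :=
    P.condH_mono_left Zv Yv _
  have h4 := P.condH_chain Zv Yv (fun ω => (Xv ω, Pv ω))
  have h5 : P.condH Zv (fun ω => (Yv ω, (Xv ω, Pv ω))) ≤
      P.condH Zv (fun ω => (Yv ω, Pv ω)) :=
    P.condH_cond_det_le Zv (fun ω => (Yv ω, (Xv ω, Pv ω))) (fun ω => (Yv ω, Pv ω))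
      (fun p => (p.1, p.2.2)) (fun ω => rfl)
  linarith

end FinProbSpace

section ULDCNumeric

open FinProbSpace

/-- `c_k = (1/N) + ⋯ + (1/N)^(K-k)`. -/
def ckof (N K k : ℕ) : ℝ := ∑ j ∈ Finset.range (K - k), ((N : ℝ))⁻¹ ^ (j + 1)

lemma ck_K (N K : ℕ) : ckof N K K = 0 := by simp [ckof]

lemma ck_pos {N K k : ℕ} (hN : 2 ≤ N) (h : k < K) : 0 < ckof N K k := by
  have hN0 : (0:ℝ) < (N:ℝ) := by
    have : 0 < N := by omega
    exact_mod_cast this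
  refine Finset.sum_pos (fun j _ => by positivity) ?_
  rw [Finset.nonempty_range_iff]
  omega

lemma ck_nonneg {N K k : ℕ} (hN : 2 ≤ N) : 0 ≤ ckof N K k := by
  have hN0 : (0:ℝ) < (N:ℝ) := by
    have : 0 < N := by omega
    exact_mod_cast this
  exact Finset.sum_nonneg fun j _ => by positivity

lemma ck_rec {N K k : ℕ} (hN : 2 ≤ N) (h : k < K) :
    (N : ℝ) * ckof N K k = 1 + ckof N K (k + 1) := by
  have hN0 : ((N:ℝ)) ≠ 0 := by
    have : 0 < N := by omega
    positivity
  have e1 : K - k = (K - (k+1)) + 1 := by omega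
  have hterm : ∀ j : ℕ, (N:ℝ) * ((N:ℝ))⁻¹ ^ (j+1) = ((N:ℝ))⁻¹ ^ j := by
    intro j
    rw [pow_succ']
    rw [← mul_assoc, mul_inv_cancel₀ hN0, one_mul]
  rw [ckof, ckof, e1, Finset.mul_sum]
  rw [Finset.sum_congr rfl fun j _ => hterm j]
  rw [Finset.sum_range_succ']
  simp [add_comm]

lemma ck_zero_eq {N K : ℕ} {Lw Lx : ℝ} (hN : 2 ≤ N) (hK : 1 ≤ K) (hLx : 0 < Lx)
    (hcap : Lw / Lx = Cstar N K) : Lx = Lw * ckof N K 0 := by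
  have hN0 : (0:ℝ) < (N:ℝ) := by
    have : 0 < N := by omega
    exact_mod_cast this
  have hD : (0:ℝ) < ∑ j ∈ Finset.range K, (1 / (N : ℝ)) ^ j := by
    refine Finset.sum_pos (fun j _ => by positivity) ?_
    rw [Finset.nonempty_range_iff]
    omega
  have hNc : (N : ℝ) * ckof N K 0 = ∑ j ∈ Finset.range K, (1 / (N : ℝ)) ^ j := by
    have hterm : ∀ j : ℕ, (N:ℝ) * ((N:ℝ))⁻¹ ^ (j+1) = ((N:ℝ))⁻¹ ^ j := by
      intro j
      rw [pow_succ']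
      rw [← mul_assoc, mul_inv_cancel₀ (ne_of_gt hN0), one_mul]
    rw [ckof, Finset.mul_sum, Finset.sum_congr rfl fun j _ => hterm j]
    refine Finset.sum_congr (by rw [Nat.sub_zero]) fun j _ => ?_
    rw [one_div]
  rw [Cstar] at hcap
  have hmul : Lw * (∑ j ∈ Finset.range K, (1 / (N : ℝ)) ^ j) = (N:ℝ) * Lx := by
    have := (div_eq_div_iff (ne_of_gt hLx) (ne_of_gt hD)).mp hcap
    linarith
  rw [← hNc] at hmul
  have : (N:ℝ) * (Lw * ckof N K 0) = (N:ℝ) * Lx := by linarith [hmul]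
  exact (mul_left_cancel₀ (ne_of_gt hN0) this).symm

end ULDCNumeric

section ULDCMain

open FinProbSpace

variable {K N M : ℕ} {Lw Lx : ℝ}

lemma LDC.hk_le (C : LDC K N M Lw Lx) (hK : 1 ≤ K) (hN : 2 ≤ N)
    (hLx : 0 < Lx) (hU : C.IsUniversal) (hcap : Lw / Lx = Cstar N K) :
    ∀ k, k ≤ K → ∀ m, C.hk k m ≤ Lw * ckof N K k := by
  intro k
  induction k with
  | zero =>
    intro _ m
    rw [C.hk_zero m, ← ck_zero_eq hN hK hLx hcap]
  | succ k ih =>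
    intro hk1 m
    have hkK : k < K := hk1
    obtain ⟨S, hS, hmS⟩ := hU m ⟨k, hkK⟩
    have hcard := C.decSets_card ⟨k, hkK⟩ S hS
    have h1 : C.hk (k+1) m ≤ C.hkS (k+1) S := C.hk_le_hkS (k+1) hmS
    have h2 : C.hkS (k+1) S = C.hkS k S - Lw := C.hkS_step hK k hkK S hS
    have h3 : C.hkS k S ≤ ∑ m' ∈ S, C.hk k m' := C.hkS_le_sum k S
    have h4 : ∑ m' ∈ S, C.hk k m' ≤ (N : ℝ) * (Lw * ckof N K k) := by
      calc ∑ m' ∈ S, C.hk k m' ≤ ∑ m' ∈ S, Lw * ckof N K k :=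
            Finset.sum_le_sum fun m' _ => ih (le_of_lt hkK) m'
        _ = (S.card : ℝ) * (Lw * ckof N K k) := by
            rw [Finset.sum_const, nsmul_eq_mul]
        _ = (N : ℝ) * (Lw * ckof N K k) := by rw [hcard]
    have h5 : (N:ℝ) * (Lw * ckof N K k) = Lw + Lw * ckof N K (k+1) := by
      have hrec := ck_rec hN hkK
      calc (N:ℝ) * (Lw * ckof N K k) = Lw * ((N:ℝ) * ckof N K k) := by ring
        _ = Lw * (1 + ckof N K (k+1)) := by rw [hrec]
        _ = Lw + Lw * ckof N K (k+1) := by ring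
    linarith

lemma LDC.hk_eq (C : LDC K N M Lw Lx) (hK : 1 ≤ K) (hN : 2 ≤ N)
    (hLw : 0 < Lw) (hLx : 0 < Lx) (hU : C.IsUniversal) (hcap : Lw / Lx = Cstar N K) :
    ∀ k, k ≤ K → ∀ m, C.hk k m = Lw * ckof N K k := by
  have lower : ∀ d k, k + d = K → ∀ m, Lw * ckof N K k ≤ C.hk k m := by
    intro d
    induction d with
    | zero =>
      intro k hkd m
      have : k = K := by omega
      subst this
      rw [ck_K, C.hk_K hK m, mul_zero]
    | succ d ih =>
      intro k hkd m
      have hkK : k < K := by omega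
      obtain ⟨S, hS, hmS⟩ := hU m ⟨k, hkK⟩
      have hcard := C.decSets_card ⟨k, hkK⟩ S hS
      have h2 : C.hkS (k+1) S = C.hkS k S - Lw := C.hkS_step hK k hkK S hS
      have h1 : C.hk (k+1) m ≤ C.hkS (k+1) S := C.hk_le_hkS (k+1) hmS
      have hlow : Lw * ckof N K (k+1) ≤ C.hk (k+1) m := ih (k+1) (by omega) m
      have h3 : C.hkS k S ≤ ∑ m' ∈ S, C.hk k m' := C.hkS_le_sum k S
      have hsplit : ∑ m' ∈ S, C.hk k m' = C.hk k m + ∑ m' ∈ S.erase m, C.hk k m' := by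
        rw [← Finset.add_sum_erase S _ hmS]
      have herase : ∑ m' ∈ S.erase m, C.hk k m' ≤ ((N:ℝ) - 1) * (Lw * ckof N K k) := by
        calc ∑ m' ∈ S.erase m, C.hk k m' ≤ ∑ m' ∈ S.erase m, Lw * ckof N K k :=
              Finset.sum_le_sum fun m' _ =>
                C.hk_le hK hN hLx hU hcap k (le_of_lt hkK) m'
          _ = ((S.erase m).card : ℝ) * (Lw * ckof N K k) := by
              rw [Finset.sum_const, nsmul_eq_mul]
          _ = ((N:ℝ) - 1) * (Lw * ckof N K k) := by
              rw [Finset.card_erase_of_mem hmS, hcard]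
              have : ((N - 1 : ℕ) : ℝ) = (N:ℝ) - 1 := by
                rw [Nat.cast_sub (by omega)]
                simp
              rw [this]
      have hrec := ck_rec hN hkK
      have hrecL : (N:ℝ) * (Lw * ckof N K k) = Lw + Lw * ckof N K (k+1) := by
        calc (N:ℝ) * (Lw * ckof N K k) = Lw * ((N:ℝ) * ckof N K k) := by ring
          _ = Lw * (1 + ckof N K (k+1)) := by rw [hrec]
          _ = Lw + Lw * ckof N K (k+1) := by ring
      -- hk k m ≥ hkS k S - (N-1)(Lw ck) ≥ (Lw + Lw ck1) - (N-1) Lw ck = Lw ck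
      nlinarith [h1, h2, h3, hsplit, herase, hlow, hrecL]
  intro k hkK m
  exact le_antisymm (C.hk_le hK hN hLx hU hcap k hkK m) (lower (K - k) k (by omega) m)

lemma LDC.hkS_val (C : LDC K N M Lw Lx) (hK : 1 ≤ K) (hN : 2 ≤ N)
    (hLw : 0 < Lw) (hLx : 0 < Lx) (hU : C.IsUniversal) (hcap : Lw / Lx = Cstar N K)
    (k : ℕ) (hkK : k < K) (S : Finset (Fin M)) (hS : S ∈ C.decSets ⟨k, hkK⟩) :
    C.hkS (k+1) S = Lw * ckof N K (k+1) ∧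
      C.hkS k S = Lw + Lw * ckof N K (k+1) := by
  have hcard := C.decSets_card ⟨k, hkK⟩ S hS
  have hSne : S.Nonempty := by
    rw [← Finset.card_pos, hcard]
    omega
  obtain ⟨m₀, hm₀⟩ := hSne
  have h2 : C.hkS (k+1) S = C.hkS k S - Lw := C.hkS_step hK k hkK S hS
  have hup : C.hkS k S ≤ Lw + Lw * ckof N K (k+1) := by
    have h3 : C.hkS k S ≤ ∑ m' ∈ S, C.hk k m' := C.hkS_le_sum k S
    have h4 : ∑ m' ∈ S, C.hk k m' = (N:ℝ) * (Lw * ckof N K k) := by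
      calc ∑ m' ∈ S, C.hk k m' = ∑ m' ∈ S, Lw * ckof N K k :=
            Finset.sum_congr rfl fun m' _ =>
              C.hk_eq hK hN hLw hLx hU hcap k (le_of_lt hkK) m'
        _ = (S.card : ℝ) * (Lw * ckof N K k) := by
            rw [Finset.sum_const, nsmul_eq_mul]
        _ = (N:ℝ) * (Lw * ckof N K k) := by rw [hcard]
    have hrec := ck_rec hN hkK
    have hrecL : (N:ℝ) * (Lw * ckof N K k) = Lw + Lw * ckof N K (k+1) := by
      calc (N:ℝ) * (Lw * ckof N K k) = Lw * ((N:ℝ) * ckof N K k) := by ring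
        _ = Lw * (1 + ckof N K (k+1)) := by rw [hrec]
        _ = Lw + Lw * ckof N K (k+1) := by ring
    linarith
  have hlo : Lw * ckof N K (k+1) ≤ C.hkS (k+1) S := by
    have := C.hk_le_hkS (k+1) hm₀
    have heq := C.hk_eq hK hN hLw hLx hU hcap (k+1) hkK m₀
    linarith
  constructor <;> linarith

/-- All symbols in a tight decoding set are mutually determined given `W_{<k+1}`. -/
lemma LDC.rel_in_S (C : LDC K N M Lw Lx) (hK : 1 ≤ K) (hN : 2 ≤ N)
    (hLw : 0 < Lw) (hLx : 0 < Lx) (hU : C.IsUniversal) (hcap : Lw / Lx = Cstar N K)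
    (k : ℕ) (hkK : k < K) (S : Finset (Fin M)) (hS : S ∈ C.decSets ⟨k, hkK⟩)
    {m' m'' : Fin M} (hm' : m' ∈ S) (hm'' : m'' ∈ S) :
    C.P.condH (C.X m') (fun ω => (C.X m'' ω, C.preW (k+1) ω)) = 0 := by
  refine le_antisymm ?_ (C.P.condH_nonneg _ _)
  have e1 : C.P.condH (C.X m') (fun ω => (C.X m'' ω, C.preW (k+1) ω))
      = C.P.H (fun ω => (C.X m' ω, (C.X m'' ω, C.preW (k+1) ω)))
        - C.P.H (fun ω => (C.X m'' ω, C.preW (k+1) ω)) := rfl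
  have u1 : C.P.H (fun ω => (C.X m' ω, (C.X m'' ω, C.preW (k+1) ω))) ≤
      C.P.H (fun ω => (C.XS S ω, C.preW (k+1) ω)) := by
    refine C.P.H_comp_le (fun ω => (C.XS S ω, C.preW (k+1) ω))
      (fun p => (p.1 ⟨m', hm'⟩, (p.1 ⟨m'', hm''⟩, p.2))) _ (fun ω => rfl)
  have e2 : C.P.H (fun ω => (C.XS S ω, C.preW (k+1) ω))
      = C.hkS (k+1) S + C.P.H (C.preW (k+1)) := by
    have : C.hkS (k+1) S = C.P.H (fun ω => (C.XS S ω, C.preW (k+1) ω))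
        - C.P.H (C.preW (k+1)) := rfl
    linarith
  have e3 : C.P.H (fun ω => (C.X m'' ω, C.preW (k+1) ω))
      = C.hk (k+1) m'' + C.P.H (C.preW (k+1)) := by
    have : C.hk (k+1) m'' = C.P.H (fun ω => (C.X m'' ω, C.preW (k+1) ω))
        - C.P.H (C.preW (k+1)) := rfl
    linarith
  have hv1 := (C.hkS_val hK hN hLw hLx hU hcap k hkK S hS).1
  have hv2 := C.hk_eq hK hN hLw hLx hU hcap (k+1) hkK m''
  rw [e2, hv1] at u1
  rw [e1, e3, hv2]
  linarith

/-- Distinct symbols in a tight decoding set are NOT determined by one another given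
`W_{<k}`. -/
lemma LDC.not_rel_in_S (C : LDC K N M Lw Lx) (hK : 1 ≤ K) (hN : 2 ≤ N)
    (hLw : 0 < Lw) (hLx : 0 < Lx) (hU : C.IsUniversal) (hcap : Lw / Lx = Cstar N K)
    (k : ℕ) (hkK : k < K) (S : Finset (Fin M)) (hS : S ∈ C.decSets ⟨k, hkK⟩)
    {m' m'' : Fin M} (hm' : m' ∈ S) (hm'' : m'' ∈ S) (hne : m' ≠ m'') :
    ¬ (C.P.condH (C.X m') (fun ω => (C.X m'' ω, C.preW k ω)) = 0) := by
  intro h0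
  have hcard := C.decSets_card ⟨k, hkK⟩ S hS
  -- the pair has conditional entropy Lw * c_k
  have hchain := C.P.condH_chain (C.X m') (C.X m'') (C.preW k)
  have hm''v := C.hk_eq hK hN hLw hLx hU hcap k (le_of_lt hkK) m''
  have epair : C.P.condH (fun ω => (C.X m' ω, C.X m'' ω)) (C.preW k)
      = Lw * ckof N K k := by
    rw [hchain, h0, zero_add]
    exact hm''v
  -- but the full decoding set needs at least N * Lw * c_k
  set rest := (S.erase m').erase m'' with hrest
  have hrestcard : rest.card = N - 2 := by
    have hm''e : m'' ∈ S.erase m' := Finset.mem_erase.mpr ⟨Ne.symm hne, hm''⟩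
    rw [hrest, Finset.card_erase_of_mem hm''e, Finset.card_erase_of_mem hm', hcard]
    omega
  have hcomp : C.hkS k S ≤
      C.P.condH (fun ω => ((C.X m' ω, C.X m'' ω), C.XS rest ω)) (C.preW k) := by
    refine C.P.condH_comp_le _ (C.XS S) (C.preW k)
      (fun p => fun x : {x // x ∈ S} =>
        if h1 : x.1 = m' then p.1.1 else if h2 : x.1 = m'' then p.1.2
        else p.2 ⟨x.1, Finset.mem_erase.mpr ⟨h2, Finset.mem_erase.mpr ⟨h1, x.2⟩⟩⟩)
      (fun ω => ?_)
    funext x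
    show (if h1 : x.1 = m' then C.X m' ω else if h2 : x.1 = m'' then C.X m'' ω
      else C.XS rest ω ⟨x.1, Finset.mem_erase.mpr ⟨h2, Finset.mem_erase.mpr ⟨h1, x.2⟩⟩⟩)
        = C.XS S ω x
    have e : C.XS S ω x = C.X x.1 ω := rfl
    split_ifs with h1 h2
    · rw [e, h1]
    · rw [e, h2]
    · rfl
  have hpairle := C.P.condH_pair_le (fun ω => (C.X m' ω, C.X m'' ω)) (C.XS rest)
    (C.preW k)
  have hrestle : C.P.condH (C.XS rest) (C.preW k) ≤ ((N:ℝ) - 2) * (Lw * ckof N K k) := by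
    have h3 : C.hkS k rest ≤ ∑ m''' ∈ rest, C.hk k m''' := C.hkS_le_sum k rest
    have h4 : ∑ m''' ∈ rest, C.hk k m''' = ((N:ℝ) - 2) * (Lw * ckof N K k) := by
      calc ∑ m''' ∈ rest, C.hk k m''' = ∑ m''' ∈ rest, Lw * ckof N K k :=
            Finset.sum_congr rfl fun m''' _ =>
              C.hk_eq hK hN hLw hLx hU hcap k (le_of_lt hkK) m'''
        _ = (rest.card : ℝ) * (Lw * ckof N K k) := by
            rw [Finset.sum_const, nsmul_eq_mul]
        _ = ((N:ℝ) - 2) * (Lw * ckof N K k) := by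
            rw [hrestcard]
            have : ((N - 2 : ℕ) : ℝ) = (N:ℝ) - 2 := by
              rw [Nat.cast_sub (by omega)]
              simp
            rw [this]
    exact le_trans h3 (le_of_eq h4)
  have hval := (C.hkS_val hK hN hLw hLx hU hcap k hkK S hS).2
  have hrec := ck_rec hN hkK
  have hrecL : (N:ℝ) * (Lw * ckof N K k) = Lw + Lw * ckof N K (k+1) := by
    calc (N:ℝ) * (Lw * ckof N K k) = Lw * ((N:ℝ) * ckof N K k) := by ring
      _ = Lw * (1 + ckof N K (k+1)) := by rw [hrec]
      _ = Lw + Lw * ckof N K (k+1) := by ring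
  have hckpos : 0 < ckof N K k := ck_pos hN hkK
  -- combine: Lw + Lw*c_{k+1} = hkS k S ≤ Lw c_k + (N-2) Lw c_k = (N-1) Lw c_k
  nlinarith [hcomp, hpairle, hrestle, hval, hrecL, epair, hckpos, hLw]

end ULDCMain

section ULDCRel

open FinProbSpace

variable {K N M : ℕ} {Lw Lx : ℝ}

/-- `m` and `m'` determine each other given `W_{<k}`. -/
def LDC.relk (C : LDC K N M Lw Lx) (k : ℕ) (m m' : Fin M) : Prop :=
  C.P.condH (C.X m') (fun ω => (C.X m ω, C.preW k ω)) = 0 ∧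
  C.P.condH (C.X m) (fun ω => (C.X m' ω, C.preW k ω)) = 0

lemma LDC.relk_refl (C : LDC K N M Lw Lx) (k : ℕ) (m : Fin M) : C.relk k m m := by
  constructor <;>
    exact C.P.condH_fn_zero _ _ Prod.fst (fun ω => rfl)

lemma LDC.relk_symm (C : LDC K N M Lw Lx) {k : ℕ} {m m' : Fin M}
    (h : C.relk k m m') : C.relk k m' m := ⟨h.2, h.1⟩

lemma LDC.relk_trans (C : LDC K N M Lw Lx) {k : ℕ} {m m' m'' : Fin M}
    (h12 : C.relk k m m') (h23 : C.relk k m' m'') : C.relk k m m'' := by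
  constructor
  · exact C.P.condH_det_trans (C.X m) (C.X m') (C.X m'') (C.preW k) h12.1 h23.1
  · exact C.P.condH_det_trans (C.X m'') (C.X m') (C.X m) (C.preW k) h23.2 h12.2

lemma LDC.relk_mono (C : LDC K N M Lw Lx) {k : ℕ} {m m' : Fin M}
    (h : C.relk k m m') : C.relk (k+1) m m' := by
  have key : ∀ a b : Fin M,
      C.P.condH (C.X b) (fun ω => (C.X a ω, C.preW k ω)) = 0 →
      C.P.condH (C.X b) (fun ω => (C.X a ω, C.preW (k+1) ω)) = 0 := by
    intro a b hab
    refine le_antisymm ?_ (C.P.condH_nonneg _ _)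
    have hle := C.P.condH_cond_det_le (C.X b)
      (fun ω => (C.X a ω, C.preW (k+1) ω)) (fun ω => (C.X a ω, C.preW k ω))
      (fun p => (p.1, fun i : Fin K => if (i : ℕ) < k then p.2 i else none))
      (fun ω => ?_)
    · linarith
    · show (C.X a ω, fun i : Fin K => if (i : ℕ) < k then C.preW (k+1) ω i else none)
          = (C.X a ω, C.preW k ω)
      congr 1
      funext i
      by_cases h1 : (i : ℕ) < k
      · simp [LDC.preW, h1, Nat.lt_succ_of_lt h1]
      · simp [LDC.preW, h1]
  exact ⟨key m m' h.1, key m' m h.2⟩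

lemma LDC.relk_K (C : LDC K N M Lw Lx) (hK : 1 ≤ K) (m m' : Fin M) :
    C.relk K m m' := by
  obtain ⟨ω₀⟩ := C.omega_nonempty
  have key : ∀ a b : Fin M,
      C.P.condH (C.X b) (fun ω => (C.X a ω, C.preW K ω)) = 0 := by
    intro a b
    obtain ⟨f₀, hf₀⟩ := C.coded_fn b
    refine C.P.condH_fn_zero _ _
      (fun p => f₀ (fun i => (p.2 i).getD (C.W ⟨0, hK⟩ ω₀))) (fun ω => ?_)
    rw [hf₀ ω]
    show f₀ (fun i => C.W i ω) = f₀ (fun i => (C.preW K ω i).getD (C.W ⟨0, hK⟩ ω₀))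
    congr 1
    funext i
    simp [LDC.preW, i.isLt]
  exact ⟨key m m', key m' m⟩

end ULDCRel

/-- Length converse for capacity achieving ULDCs: for `N ≥ 2`, `K ≥ 1`,
every ULDC with locality `N`, `K` source symbols, `M` coded symbols and symbol rate
`Lw / Lx = C*(N, K)` satisfies `M ≥ N^K`. -/
theorem uldc_length_converse (K N M : ℕ) (hK : 1 ≤ K) (hN : 2 ≤ N) (Lw Lx : ℝ)
    (hLw : 0 < Lw) (hLx : 0 < Lx) (C : LDC K N M Lw Lx) (hU : C.IsUniversal)
    (hcap : Lw / Lx = Cstar N K) : N ^ K ≤ M := by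
  classical
  -- M is positive
  have hM0 : 0 < M := by
    obtain ⟨S₀, hS₀⟩ := C.decSets_nonempty ⟨0, hK⟩
    have hc := C.decSets_card ⟨0, hK⟩ S₀ hS₀
    have : S₀.Nonempty := by
      rw [← Finset.card_pos, hc]; omega
    obtain ⟨m₀, _⟩ := this
    exact m₀.pos
  set m₀ : Fin M := ⟨0, hM0⟩ with hm₀def
  -- equivalence classes
  set cls : ℕ → Fin M → Finset (Fin M) :=
    fun k m => Finset.univ.filter (fun m' => C.relk k m m') with hcls
  have cls_self : ∀ k m, m ∈ cls k m := fun k m =>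
    Finset.mem_filter.mpr ⟨Finset.mem_univ m, C.relk_refl k m⟩
  have cls_eq_of_rel : ∀ k (m m' : Fin M), C.relk k m m' → cls k m = cls k m' := by
    intro k m m' h
    ext x
    simp only [hcls, Finset.mem_filter, Finset.mem_univ, true_and]
    exact ⟨fun hx => C.relk_trans (C.relk_symm h) hx, fun hx => C.relk_trans h hx⟩
  have rel_of_cls_eq : ∀ k (m m' : Fin M), cls k m = cls k m' → C.relk k m m' := by
    intro k m m' h
    have : m' ∈ cls k m := h ▸ cls_self k m'
    simpa [hcls] using this
  -- good decoding sets
  have good : ∀ k, ∀ hkK : k < K, ∀ m : Fin M, ∃ S : Finset (Fin M), m ∈ S ∧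
      S.card = N ∧ (∀ m' ∈ S, ∀ m'' ∈ S, C.relk (k+1) m' m'') ∧
      (∀ m' ∈ S, ∀ m'' ∈ S, m' ≠ m'' → ¬ C.relk k m' m'') := by
    intro k hkK m
    obtain ⟨S, hS, hmS⟩ := hU m ⟨k, hkK⟩
    refine ⟨S, hmS, C.decSets_card ⟨k, hkK⟩ S hS, ?_, ?_⟩
    · intro m' hm' m'' hm''
      exact ⟨C.rel_in_S hK hN hLw hLx hU hcap k hkK S hS hm'' hm',
        C.rel_in_S hK hN hLw hLx hU hcap k hkK S hS hm' hm''⟩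
    · intro m' hm' m'' hm'' hne hr
      exact C.not_rel_in_S hK hN hLw hLx hU hcap k hkK S hS hm'' hm' (Ne.symm hne) hr.1
  -- the class counts
  set Q : ℕ → Finset (Finset (Fin M)) := fun k => Finset.univ.image (cls k) with hQ
  have hQK : (Q K).card = 1 := by
    have he : Q K = {cls K m₀} := by
      apply Finset.Subset.antisymm
      · intro D hD
        obtain ⟨m, _, rfl⟩ := Finset.mem_image.mp hD
        rw [Finset.mem_singleton]
        exact cls_eq_of_rel K m m₀ (C.relk_K hK m m₀)
      · intro D hD
        rw [Finset.mem_singleton] at hD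
        subst hD
        exact Finset.mem_image_of_mem _ (Finset.mem_univ m₀)
    rw [he, Finset.card_singleton]
  have hstep : ∀ k, k < K → N * (Q (k+1)).card ≤ (Q k).card := by
    intro k hkK
    set g : Finset (Fin M) → Finset (Fin M) := fun D =>
      if h : ∃ m, D = cls k m then cls (k+1) h.choose else ∅ with hg
    have g_spec : ∀ m, g (cls k m) = cls (k+1) m := by
      intro m
      have hex : ∃ m', cls k m = cls k m' := ⟨m, rfl⟩
      rw [hg]
      simp only [dif_pos hex]
      have hrel : C.relk k m hex.choose := rel_of_cls_eq k m hex.choose hex.choose_spec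
      exact (cls_eq_of_rel (k+1) m hex.choose (C.relk_mono hrel)).symm
    have himg : Q (k+1) = (Q k).image g := by
      rw [hQ]
      simp only
      rw [Finset.image_image]
      exact (Finset.image_congr (fun m _ => g_spec m)).symm
    have hfib : ∀ D ∈ Q (k+1), N ≤ ((Q k).filter (fun E => g E = D)).card := by
      intro D hD
      obtain ⟨m, _, rfl⟩ := Finset.mem_image.mp hD
      obtain ⟨S, hmS, hScard, hrel, hnrel⟩ := good k hkK m
      have hsub : S.image (cls k) ⊆ (Q k).filter (fun E => g E = cls (k+1) m) := by
        intro E hE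
        obtain ⟨m', hm'S, rfl⟩ := Finset.mem_image.mp hE
        refine Finset.mem_filter.mpr
          ⟨Finset.mem_image_of_mem _ (Finset.mem_univ m'), ?_⟩
        rw [g_spec m']
        exact cls_eq_of_rel (k+1) m' m (hrel m' hm'S m hmS)
      have hinj : (S.image (cls k)).card = N := by
        rw [Finset.card_image_of_injOn, hScard]
        intro a ha b hb hab
        by_contra hne
        exact hnrel a ha b hb hne (rel_of_cls_eq k a b hab)
      calc N = (S.image (cls k)).card := hinj.symm
        _ ≤ _ := Finset.card_le_card hsub
    have hcount : (Q k).card = ∑ D ∈ Q (k+1), ((Q k).filter (fun E => g E = D)).card := by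
      refine Finset.card_eq_sum_card_fiberwise (fun E hE => ?_)
      rw [himg]
      exact Finset.mem_image_of_mem g hE
    calc N * (Q (k+1)).card = ∑ _D ∈ Q (k+1), N := by
          rw [Finset.sum_const, smul_eq_mul, mul_comm]
      _ ≤ ∑ D ∈ Q (k+1), ((Q k).filter (fun E => g E = D)).card :=
          Finset.sum_le_sum hfib
      _ = (Q k).card := hcount.symm
  have main : ∀ d, d ≤ K → N ^ d ≤ (Q (K - d)).card := by
    intro d
    induction d with
    | zero =>
      intro _
      rw [pow_zero, Nat.sub_zero]
      omega
    | succ d ih =>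
      intro hd1
      have hkK : K - (d+1) < K := by omega
      have e : K - d = (K - (d+1)) + 1 := by omega
      calc N ^ (d+1) = N * N ^ d := by ring
        _ ≤ N * (Q (K - d)).card := Nat.mul_le_mul_left N (ih (by omega))
        _ = N * (Q ((K - (d+1)) + 1)).card := by rw [← e]
        _ ≤ (Q (K - (d+1))).card := hstep _ hkK
  have hfinal := main K (le_refl K)
  rw [Nat.sub_self] at hfinal
  calc N ^ K ≤ (Q 0).card := hfinal
    _ ≤ (Finset.univ : Finset (Fin M)).card := Finset.card_image_le
    _ = M := by simp
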